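/- Let u : ℝⁿ → ℝ be measurable with ∬_{ℝ^{2n}_Ω} |u(x) − u(y)|² |x−y|^{-(n+2s)} dx dy < ∞, u|_Ω ∈ L²(Ω), ∫_Ω V u² < ∞, and u⁺ := max(u,0) ∈ X^s_0(Ω). Then u satisfies E_V(u) ≤ E_V(u + φ) for every nonnegative φ ∈ Y^s_0(Ω) (i.e. u is a superminimizer) if and only if u is a weak supersolution of L_K u + V u = f in Ω, i.e. (1/2)∬_{ℝ^{2n}_Ω} (u(x) − u(y))(φ(x) − φ(y)) K(x−y) dx dy + ∫_Ω V u φ ≥ ∫_Ω f φ for every nonnegative φ ∈ Y^s_0(Ω). -/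

import Mathlib

open MeasureTheory Real Filter
open scoped ENNReal RealInnerProductSpace

noncomputable section

/-- Euclidean space ℝⁿ. -/
abbrev En (n : ℕ) := EuclideanSpace ℝ (Fin n)

/-- The squared Gagliardo seminorm `[u]_s²`. -/
def gagliardoSq (n : ℕ) (s : ℝ) (u : En n → ℝ) : ℝ≥0∞ :=
  ∫⁻ p : En n × En n,
    ENNReal.ofReal ((u p.1 - u p.2) ^ 2 * ‖p.1 - p.2‖ ^ (-((n : ℝ) + 2 * s)))

/-- `K` is a symmetric measurable kernel comparable to `c⬝|y|^{-(n+2s)}`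
with ellipticity constants `lam ≤ Lam`. -/
def IsKernel (n : ℕ) (s lam Lam c : ℝ) (K : En n → ℝ) : Prop :=
  Measurable K ∧ (∀ y : En n, K (-y) = K y) ∧
    ∀ y : En n, y ≠ 0 →
      lam * c * ‖y‖ ^ (-((n : ℝ) + 2 * s)) ≤ K y ∧
        K y ≤ Lam * c * ‖y‖ ^ (-((n : ℝ) + 2 * s))

/-- The nonlocal operator `L_K` applied to a test function. -/
def LK (n : ℕ) (K φ : En n → ℝ) (x : En n) : ℝ :=
  (1 / 2) * ∫ y : En n, (2 * φ x - φ (x + y) - φ (x - y)) * K y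

/-- `V ∈ L^q_loc(ℝⁿ)`. -/
def LocLq (n : ℕ) (q : ℝ) (V : En n → ℝ) : Prop :=
  ∀ A : Set (En n), IsCompact A → MemLp V (ENNReal.ofReal q) (volume.restrict A)

/-- The space `X^s_0(Ω)`: measurable functions vanishing a.e. outside `Ω`
with finite Gagliardo seminorm. -/
def Xs0 (n : ℕ) (s : ℝ) (Ω : Set (En n)) : Set (En n → ℝ) :=
  {u | Measurable u ∧ (∀ᵐ x : En n ∂volume, x ∉ Ω → u x = 0) ∧ gagliardoSq n s u < ⊤}

/-- `∫_Ω V u²`. -/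
def VIntSq (n : ℕ) (V : En n → ℝ) (Ω : Set (En n)) (u : En n → ℝ) : ℝ≥0∞ :=
  ∫⁻ x in Ω, ENNReal.ofReal (V x * u x ^ 2)

/-- The space `Y^s_0(Ω) = X^s_0(Ω) ∩ L²_V(Ω)`. -/
def Ys0 (n : ℕ) (s : ℝ) (Ω : Set (En n)) (V : En n → ℝ) : Set (En n → ℝ) :=
  {u | u ∈ Xs0 n s Ω ∧ VIntSq n V Ω u < ⊤}

/-- The squared `Y^s_0(Ω)` norm: `[u]_s² + ∫_Ω V u²`. -/
def YnormSq (n : ℕ) (s : ℝ) (Ω : Set (En n)) (V : En n → ℝ) (u : En n → ℝ) : ℝ≥0∞ :=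
  gagliardoSq n s u + VIntSq n V Ω u

/-- The kernel quadratic form `∬ (u(x)-u(y))² K(x-y) dx dy` (as an `ℝ≥0∞`-integral). -/
def kerSq (n : ℕ) (K : En n → ℝ) (u : En n → ℝ) : ℝ≥0∞ :=
  ∫⁻ p : En n × En n, ENNReal.ofReal ((u p.1 - u p.2) ^ 2 * K (p.1 - p.2))

/-- The bilinear form `(1/2)∬ (u(x)-u(y))(φ(x)-φ(y)) K(x-y) dx dy`. -/
def bilin (n : ℕ) (K : En n → ℝ) (u φ : En n → ℝ) : ℝ :=
  (1 / 2) * ∫ p : En n × En n, (u p.1 - u p.2) * (φ p.1 - φ p.2) * K (p.1 - p.2)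

/-- The energy functional `E_V`. -/
def energy (n : ℕ) (K V f : En n → ℝ) (Ω : Set (En n)) (v : En n → ℝ) : ℝ :=
  (1 / 2) * (kerSq n K v).toReal + (VIntSq n V Ω v).toReal - 2 * ∫ x in Ω, f x * v x

/-- The region `ℝ^{2n}_Ω = (ℝⁿ×ℝⁿ) \ (Ωᶜ×Ωᶜ)`. -/
def R2n (n : ℕ) (Ω : Set (En n)) : Set (En n × En n) := (Ωᶜ ×ˢ Ωᶜ)ᶜ

/-- The squared Gagliardo seminorm restricted to `ℝ^{2n}_Ω`. -/
def gagliardoSqOn (n : ℕ) (s : ℝ) (Ω : Set (En n)) (u : En n → ℝ) : ℝ≥0∞ :=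
  ∫⁻ p in R2n n Ω,
    ENNReal.ofReal ((u p.1 - u p.2) ^ 2 * ‖p.1 - p.2‖ ^ (-((n : ℝ) + 2 * s)))

/-- The kernel quadratic form restricted to `ℝ^{2n}_Ω`. -/
def kerSqOn (n : ℕ) (Ω : Set (En n)) (K : En n → ℝ) (u : En n → ℝ) : ℝ≥0∞ :=
  ∫⁻ p in R2n n Ω, ENNReal.ofReal ((u p.1 - u p.2) ^ 2 * K (p.1 - p.2))

/-- The bilinear form restricted to `ℝ^{2n}_Ω`. -/
def bilinOn (n : ℕ) (Ω : Set (En n)) (K : En n → ℝ) (u φ : En n → ℝ) : ℝ :=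
  (1 / 2) * ∫ p in R2n n Ω, (u p.1 - u p.2) * (φ p.1 - φ p.2) * K (p.1 - p.2)

/-- The energy functional `E_V` with the double integral over `ℝ^{2n}_Ω`. -/
def energyOn (n : ℕ) (Ω : Set (En n)) (K V f : En n → ℝ) (v : En n → ℝ) : ℝ :=
  (1 / 2) * (kerSqOn n Ω K v).toReal + (VIntSq n V Ω v).toReal - 2 * ∫ x in Ω, f x * v x

/-! ### Auxiliary lemmas -/

section Aux

lemma aux_toReal_lintegral {α : Type*} [MeasurableSpace α] {μ : Measure α} {g : α → ℝ}
    (hm : AEStronglyMeasurable g μ) (h0 : 0 ≤ᵐ[μ] g) :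
    (∫⁻ x, ENNReal.ofReal (g x) ∂μ).toReal = ∫ x, g x ∂μ :=
  (integral_eq_lintegral_of_nonneg_ae h0 hm).symm

lemma aux_integrable {α : Type*} [MeasurableSpace α] {μ : Measure α} {g : α → ℝ}
    (hm : AEStronglyMeasurable g μ) (h0 : 0 ≤ᵐ[μ] g)
    (hfin : ∫⁻ x, ENNReal.ofReal (g x) ∂μ < ⊤) : Integrable g μ :=
  ⟨hm, (hasFiniteIntegral_iff_ofReal h0).2 hfin⟩

lemma aux_integrable_mul {α : Type*} [MeasurableSpace α] {μ : Measure α} {g h : α → ℝ}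
    (hg : MemLp g 2 μ) (hh : MemLp h 2 μ) : Integrable (fun x => g x * h x) μ := by
  have hg2 := (memLp_two_iff_integrable_sq hg.aestronglyMeasurable).1 hg
  have hh2 := (memLp_two_iff_integrable_sq hh.aestronglyMeasurable).1 hh
  refine ((hg2.add hh2).const_mul (1/2)).mono'
    (hg.aestronglyMeasurable.mul hh.aestronglyMeasurable) ?_
  filter_upwards with x
  simp only [Pi.add_apply]
  rw [Real.norm_eq_abs, abs_le]
  constructor <;> nlinarith [sq_nonneg (g x - h x), sq_nonneg (g x + h x)]

variable {n : ℕ} {s lam Lam c : ℝ} {K : En n → ℝ}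

lemma kerTerm_nonneg (hlc : 0 < lam * c) (hK : IsKernel n s lam Lam c K)
    (v : En n → ℝ) (p : En n × En n) : 0 ≤ (v p.1 - v p.2) ^ 2 * K (p.1 - p.2) := by
  rcases eq_or_ne p.1 p.2 with h | h
  · simp [h]
  · have h1 := (hK.2.2 _ (sub_ne_zero.2 h)).1
    have h2 : (0:ℝ) ≤ lam * c * ‖p.1 - p.2‖ ^ (-((n:ℝ) + 2*s)) :=
      mul_nonneg hlc.le (Real.rpow_nonneg (norm_nonneg _) _)
    exact mul_nonneg (sq_nonneg _) (h2.trans h1)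

lemma kerCross_abs_le (hlc : 0 < lam * c) (hK : IsKernel n s lam Lam c K)
    (u φ : En n → ℝ) (p : En n × En n) :
    |(u p.1 - u p.2) * (φ p.1 - φ p.2) * K (p.1 - p.2)| ≤
      (1/2) * ((u p.1 - u p.2) ^ 2 * K (p.1 - p.2) + (φ p.1 - φ p.2) ^ 2 * K (p.1 - p.2)) := by
  rcases eq_or_ne p.1 p.2 with h | h
  · simp [h]
  · have hK0 : 0 ≤ K (p.1 - p.2) :=
      le_trans (mul_nonneg hlc.le (Real.rpow_nonneg (norm_nonneg _) _))
        (hK.2.2 _ (sub_ne_zero.2 h)).1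
    rw [abs_le]
    constructor <;>
      nlinarith [mul_nonneg (sq_nonneg (u p.1 - u p.2 - (φ p.1 - φ p.2))) hK0,
        mul_nonneg (sq_nonneg (u p.1 - u p.2 + (φ p.1 - φ p.2))) hK0]

lemma kerSqOn_lt_top {Ω : Set (En n)} (hΛc : 0 ≤ Lam * c) (hK : IsKernel n s lam Lam c K)
    {v : En n → ℝ} (hg : gagliardoSqOn n s Ω v < ⊤) : kerSqOn n Ω K v < ⊤ := by
  have hle : kerSqOn n Ω K v ≤ ENNReal.ofReal (Lam * c) * gagliardoSqOn n s Ω v := by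
    unfold kerSqOn gagliardoSqOn
    rw [← lintegral_const_mul' _ _ ENNReal.ofReal_ne_top]
    refine lintegral_mono fun p => ?_
    rcases eq_or_ne p.1 p.2 with h | h
    · simp [h]
    · rw [← ENNReal.ofReal_mul hΛc]
      refine ENNReal.ofReal_le_ofReal ?_
      have h2 := (hK.2.2 _ (sub_ne_zero.2 h)).2
      nlinarith [mul_le_mul_of_nonneg_left h2 (sq_nonneg (v p.1 - v p.2))]
  exact hle.trans_lt (ENNReal.mul_lt_top ENNReal.ofReal_lt_top hg)

lemma gagliardoSqOn_le (n : ℕ) (s : ℝ) (Ω : Set (En n)) (v : En n → ℝ) :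
    gagliardoSqOn n s Ω v ≤ gagliardoSq n s v :=
  setLIntegral_le_lintegral _ _

lemma gagliardoSq_smul (n : ℕ) (s : ℝ) (ε : ℝ) (φ : En n → ℝ) :
    gagliardoSq n s (fun x => ε * φ x) = ENNReal.ofReal (ε^2) * gagliardoSq n s φ := by
  unfold gagliardoSq
  rw [← lintegral_const_mul' _ _ ENNReal.ofReal_ne_top]
  congr 1; funext p
  rw [← ENNReal.ofReal_mul (sq_nonneg ε)]
  congr 1; ring

lemma kerSqOn_smul (n : ℕ) (Ω : Set (En n)) (K : En n → ℝ) (ε : ℝ) (φ : En n → ℝ) :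
    kerSqOn n Ω K (fun x => ε * φ x) = ENNReal.ofReal (ε^2) * kerSqOn n Ω K φ := by
  unfold kerSqOn
  rw [← lintegral_const_mul' _ _ ENNReal.ofReal_ne_top]
  congr 1; funext p
  rw [← ENNReal.ofReal_mul (sq_nonneg ε)]
  congr 1; ring

lemma VIntSq_smul (n : ℕ) (V : En n → ℝ) (Ω : Set (En n)) (ε : ℝ) (φ : En n → ℝ) :
    VIntSq n V Ω (fun x => ε * φ x) = ENNReal.ofReal (ε^2) * VIntSq n V Ω φ := by
  unfold VIntSq
  rw [← lintegral_const_mul' _ _ ENNReal.ofReal_ne_top]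
  congr 1; funext x
  rw [← ENNReal.ofReal_mul (sq_nonneg ε)]
  congr 1; ring

lemma bilinOn_smul (n : ℕ) (Ω : Set (En n)) (K : En n → ℝ) (u : En n → ℝ) (ε : ℝ)
    (φ : En n → ℝ) :
    bilinOn n Ω K u (fun x => ε * φ x) = ε * bilinOn n Ω K u φ := by
  simp only [bilinOn]
  rw [show (fun p : En n × En n => (u p.1 - u p.2) * (ε * φ p.1 - ε * φ p.2) * K (p.1 - p.2)) =
      fun p : En n × En n => ε * ((u p.1 - u p.2) * (φ p.1 - φ p.2) * K (p.1 - p.2)) from by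
        funext p; ring]
  rw [integral_const_mul]
  ring

end Aux
/-- Functions vanishing outside a bounded set with finite Gagliardo seminorm are in `L²`. -/
lemma memL2_of_gagliardo {n : ℕ} (hn : 2 ≤ n) {s : ℝ} (hs0 : 0 < s)
    {Ω : Set (En n)} (hΩm : MeasurableSet Ω) (hΩb : Bornology.IsBounded Ω)
    {φ : En n → ℝ} (hφm : Measurable φ)
    (h0 : ∀ᵐ x : En n ∂volume, x ∉ Ω → φ x = 0)
    (hg : gagliardoSq n s φ < ⊤) :
    MemLp φ 2 (volume.restrict Ω) := by
  obtain ⟨r, hr⟩ := hΩb.subset_closedBall 0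
  set R : ℝ := max r 1 with hRdef
  have hR0 : (0:ℝ) < R := lt_of_lt_of_le one_pos (le_max_right _ _)
  have hΩR : Ω ⊆ Metric.closedBall 0 R :=
    hr.trans (Metric.closedBall_subset_closedBall (le_max_left _ _))
  set e : ℝ := -((n : ℝ) + 2 * s) with hedef
  have he : e ≤ 0 := by
    rw [hedef]; simp only [neg_nonpos]; positivity
  set κ : ℝ := (4 * R) ^ e with hκdef
  have hκ : 0 < κ := Real.rpow_pos_of_pos (by linarith) _
  set A : Set (En n) := Metric.closedBall 0 (3 * R) \ Metric.ball 0 (2 * R) with hAdef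
  have hAm : MeasurableSet A := measurableSet_closedBall.diff measurableSet_ball
  have hAnorm : ∀ y ∈ A, 2 * R ≤ ‖y‖ ∧ ‖y‖ ≤ 3 * R := by
    intro y hy
    rcases hy with ⟨hy1, hy2⟩
    rw [Metric.mem_closedBall, dist_zero_right] at hy1
    rw [Metric.mem_ball, dist_zero_right, not_lt] at hy2
    exact ⟨hy2, hy1⟩
  have hAΩ : ∀ y ∈ A, y ∉ Ω := by
    intro y hy hyΩ
    have h1 := (hAnorm y hy).1
    have h2 : ‖y‖ ≤ R := by
      have := hΩR hyΩ; rwa [Metric.mem_closedBall, dist_zero_right] at this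
    linarith
  have hdist : ∀ x ∈ Ω, ∀ y ∈ A, κ ≤ ‖x - y‖ ^ e := by
    intro x hx y hy
    have hxR : ‖x‖ ≤ R := by
      have := hΩR hx; rwa [Metric.mem_closedBall, dist_zero_right] at this
    obtain ⟨hy1, hy2⟩ := hAnorm y hy
    have hlow : R ≤ ‖x - y‖ := by
      have h3 : ‖y‖ - ‖x‖ ≤ ‖x - y‖ := by
        have := abs_norm_sub_norm_le x y
        rw [abs_le] at this
        linarith [this.1]
      linarith
    have hup : ‖x - y‖ ≤ 4 * R := by
      calc ‖x - y‖ ≤ ‖x‖ + ‖y‖ := norm_sub_le _ _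
        _ ≤ 4 * R := by linarith
    exact Real.rpow_le_rpow_of_nonpos (lt_of_lt_of_le hR0 hlow) hup he
  -- positivity and finiteness of `volume A`
  set x₀ : En n := EuclideanSpace.single (⟨0, by omega⟩ : Fin n) ((5/2) * R) with hx₀def
  have hx₀ : ‖x₀‖ = (5/2) * R := by
    rw [hx₀def, EuclideanSpace.norm_single, Real.norm_eq_abs, abs_of_pos (by linarith)]
  have hball : Metric.ball x₀ (R/2) ⊆ A := by
    intro y hy
    rw [Metric.mem_ball] at hy
    have hyx : ‖y - x₀‖ < R / 2 := by rwa [← dist_eq_norm]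
    have hy1 : ‖y‖ ≤ 3 * R := by
      calc ‖y‖ = ‖y - x₀ + x₀‖ := by rw [sub_add_cancel]
        _ ≤ ‖y - x₀‖ + ‖x₀‖ := norm_add_le _ _
        _ ≤ 3 * R := by rw [hx₀]; linarith
    have hy2 : 2 * R < ‖y‖ := by
      have h3 : ‖x₀‖ - ‖y‖ ≤ ‖x₀ - y‖ := by
        have := abs_norm_sub_norm_le x₀ y
        rw [abs_le] at this
        linarith [this.1]
      rw [norm_sub_rev] at h3
      rw [hx₀] at h3
      linarith
    constructor
    · rw [Metric.mem_closedBall, dist_zero_right]; exact hy1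
    · rw [Metric.mem_ball, dist_zero_right, not_lt]; linarith
  have hApos : 0 < volume A :=
    lt_of_lt_of_le (Metric.measure_ball_pos volume x₀ (by linarith)) (measure_mono hball)
  have hAfin : volume A < ⊤ :=
    lt_of_le_of_lt (measure_mono Set.diff_subset) measure_closedBall_lt_top
  -- the key estimate
  set I : ℝ≥0∞ := ∫⁻ x in Ω, ENNReal.ofReal (φ x ^ 2) with hIdef
  have key : ENNReal.ofReal κ * (I * volume A) ≤ gagliardoSq n s φ := by
    have step1 : ∫⁻ p : En n × En n in Ω ×ˢ A, ENNReal.ofReal (φ p.1 ^ 2) = I * volume A := by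
      rw [Measure.volume_eq_prod, ← Measure.prod_restrict,
        lintegral_prod (fun p => ENNReal.ofReal (φ p.1 ^ 2))
          (((ENNReal.measurable_ofReal.comp (hφm.pow_const 2)).comp measurable_fst)).aemeasurable]
      simp only [lintegral_const, Measure.restrict_apply_univ]
      exact lintegral_mul_const' _ _ hAfin.ne
    have step2 : ENNReal.ofReal κ * (I * volume A) =
        ∫⁻ p : En n × En n in Ω ×ˢ A, ENNReal.ofReal κ * ENNReal.ofReal (φ p.1 ^ 2) := by
      rw [lintegral_const_mul' _ _ ENNReal.ofReal_ne_top, step1]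
    rw [step2]
    have hmem : ∀ᵐ p : En n × En n ∂volume.restrict (Ω ×ˢ A), p ∈ Ω ×ˢ A :=
      ae_restrict_mem (hΩm.prod hAm)
    have hzero : ∀ᵐ p : En n × En n ∂volume.restrict (Ω ×ˢ A), p.2 ∉ Ω → φ p.2 = 0 := by
      refine ae_restrict_of_ae ?_
      rw [Measure.volume_eq_prod, ae_iff] at *
      refine measure_mono_null (t := (Set.univ : Set (En n)) ×ˢ {x | ¬ (x ∉ Ω → φ x = 0)})
        (fun p hp => ⟨Set.mem_univ _, hp⟩) ?_
      rw [Measure.prod_prod, h0, mul_zero]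
    have hbound : ∀ᵐ p : En n × En n ∂volume.restrict (Ω ×ˢ A),
        ENNReal.ofReal κ * ENNReal.ofReal (φ p.1 ^ 2) ≤
          ENNReal.ofReal ((φ p.1 - φ p.2) ^ 2 * ‖p.1 - p.2‖ ^ (-((n : ℝ) + 2 * s))) := by
      filter_upwards [hmem, hzero] with p hp hz
      have hp1 : p.1 ∈ Ω := hp.1
      have hp2 : p.2 ∈ A := hp.2
      have hφ2 : φ p.2 = 0 := hz (hAΩ _ hp2)
      rw [← ENNReal.ofReal_mul hκ.le]
      refine ENNReal.ofReal_le_ofReal ?_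
      rw [hφ2, sub_zero, ← hedef]
      nlinarith [sq_nonneg (φ p.1), hdist _ hp1 _ hp2,
        mul_le_mul_of_nonneg_left (hdist _ hp1 _ hp2) (sq_nonneg (φ p.1))]
    calc ∫⁻ p : En n × En n in Ω ×ˢ A, ENNReal.ofReal κ * ENNReal.ofReal (φ p.1 ^ 2)
        ≤ ∫⁻ p : En n × En n in Ω ×ˢ A,
            ENNReal.ofReal ((φ p.1 - φ p.2) ^ 2 * ‖p.1 - p.2‖ ^ (-((n : ℝ) + 2 * s))) :=
          lintegral_mono_ae hbound
      _ ≤ gagliardoSq n s φ := setLIntegral_le_lintegral _ _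
  -- conclude `I < ⊤`
  have hD0 : ENNReal.ofReal κ * volume A ≠ 0 := by
    refine mul_ne_zero ?_ hApos.ne'
    simp [ENNReal.ofReal_eq_zero, not_le, hκ]
  have hDt : ENNReal.ofReal κ * volume A ≠ ⊤ :=
    ENNReal.mul_ne_top ENNReal.ofReal_ne_top hAfin.ne
  have hIfin : I < ⊤ := by
    have hkey2 : I * (ENNReal.ofReal κ * volume A) ≤ gagliardoSq n s φ := by
      calc I * (ENNReal.ofReal κ * volume A) = ENNReal.ofReal κ * (I * volume A) := by ring
        _ ≤ gagliardoSq n s φ := key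
    have : I ≤ gagliardoSq n s φ / (ENNReal.ofReal κ * volume A) :=
      (ENNReal.le_div_iff_mul_le (Or.inl hD0) (Or.inl hDt)).2 hkey2
    exact this.trans_lt (ENNReal.div_lt_top hg.ne hD0)
  have hsq : Integrable (fun x => φ x ^ 2) (volume.restrict Ω) :=
    aux_integrable ((hφm.pow_const 2).aestronglyMeasurable)
      (Filter.Eventually.of_forall fun x => sq_nonneg _) hIfin
  exact (memLp_two_iff_integrable_sq hφm.aestronglyMeasurable).2 hsq
/-- Expansion of the energy functional at `u` in direction `φ`. -/
lemma energy_expand {n : ℕ} {s lam Lam c : ℝ} (hlam : 0 < lam) (hlamLam : lam ≤ Lam)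
    (hc : 0 < c) {K : En n → ℝ} (hK : IsKernel n s lam Lam c K)
    {V f : En n → ℝ} (hVmeas : Measurable V) (hV0 : ∀ x, 0 ≤ V x)
    {Ω : Set (En n)}
    (hf : MemLp f 2 (volume.restrict Ω))
    {u : En n → ℝ} (hu_meas : Measurable u) (hu_g : gagliardoSqOn n s Ω u < ⊤)
    (hu_L2 : MemLp u 2 (volume.restrict Ω)) (hu_V : VIntSq n V Ω u < ⊤)
    {φ : En n → ℝ} (hφm : Measurable φ) (hφg : gagliardoSq n s φ < ⊤)
    (hφV : VIntSq n V Ω φ < ⊤) (hφL2 : MemLp φ 2 (volume.restrict Ω)) :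
    energyOn n Ω K V f (fun x => u x + φ x) =
      energyOn n Ω K V f u +
        2 * ((bilinOn n Ω K u φ + ∫ x in Ω, V x * u x * φ x) - ∫ x in Ω, f x * φ x) +
        ((1/2) * (kerSqOn n Ω K φ).toReal + (VIntSq n V Ω φ).toReal) := by
  have hlc : 0 < lam * c := mul_pos hlam hc
  have hΛc : 0 ≤ Lam * c := mul_nonneg (hlam.trans_le hlamLam).le hc.le
  have hKm : Measurable fun p : En n × En n => K (p.1 - p.2) :=
    hK.1.comp (measurable_fst.sub measurable_snd)
  have hdum : Measurable fun p : En n × En n => u p.1 - u p.2 :=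
    (hu_meas.comp measurable_fst).sub (hu_meas.comp measurable_snd)
  have hdφm : Measurable fun p : En n × En n => φ p.1 - φ p.2 :=
    (hφm.comp measurable_fst).sub (hφm.comp measurable_snd)
  -- kernel-part integrability
  have hker_u : kerSqOn n Ω K u < ⊤ := kerSqOn_lt_top hΛc hK hu_g
  have hker_φ : kerSqOn n Ω K φ < ⊤ :=
    kerSqOn_lt_top hΛc hK (lt_of_le_of_lt (gagliardoSqOn_le n s Ω φ) hφg)
  have hIu : Integrable (fun p : En n × En n => (u p.1 - u p.2) ^ 2 * K (p.1 - p.2))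
      (volume.restrict (R2n n Ω)) :=
    aux_integrable ((hdum.pow_const 2).mul hKm).aestronglyMeasurable
      (Filter.Eventually.of_forall (kerTerm_nonneg hlc hK u)) hker_u
  have hIφ : Integrable (fun p : En n × En n => (φ p.1 - φ p.2) ^ 2 * K (p.1 - p.2))
      (volume.restrict (R2n n Ω)) :=
    aux_integrable ((hdφm.pow_const 2).mul hKm).aestronglyMeasurable
      (Filter.Eventually.of_forall (kerTerm_nonneg hlc hK φ)) hker_φ
  have hIc : Integrable
      (fun p : En n × En n => (u p.1 - u p.2) * (φ p.1 - φ p.2) * K (p.1 - p.2))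
      (volume.restrict (R2n n Ω)) := by
    refine ((hIu.add hIφ).const_mul (1/2)).mono'
      ((hdum.mul hdφm).mul hKm).aestronglyMeasurable ?_
    filter_upwards with p
    simp only [Pi.add_apply]
    exact (Real.norm_eq_abs _) ▸ kerCross_abs_le hlc hK u φ p
  -- kernel-part toReal identities
  have h2u : (kerSqOn n Ω K u).toReal =
      ∫ p in R2n n Ω, (u p.1 - u p.2) ^ 2 * K (p.1 - p.2) :=
    aux_toReal_lintegral ((hdum.pow_const 2).mul hKm).aestronglyMeasurable
      (Filter.Eventually.of_forall (kerTerm_nonneg hlc hK u))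
  have h2φ : (kerSqOn n Ω K φ).toReal =
      ∫ p in R2n n Ω, (φ p.1 - φ p.2) ^ 2 * K (p.1 - p.2) :=
    aux_toReal_lintegral ((hdφm.pow_const 2).mul hKm).aestronglyMeasurable
      (Filter.Eventually.of_forall (kerTerm_nonneg hlc hK φ))
  have h2s : (kerSqOn n Ω K (fun x => u x + φ x)).toReal =
      ∫ p in R2n n Ω, ((u p.1 + φ p.1) - (u p.2 + φ p.2)) ^ 2 * K (p.1 - p.2) :=
    aux_toReal_lintegral
      ((((hu_meas.add hφm).comp measurable_fst).sub
          ((hu_meas.add hφm).comp measurable_snd)).pow_const 2 |>.mul hKm).aestronglyMeasurable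
      (Filter.Eventually.of_forall (kerTerm_nonneg hlc hK (fun x => u x + φ x)))
  have h3 : ∫ p in R2n n Ω, ((u p.1 + φ p.1) - (u p.2 + φ p.2)) ^ 2 * K (p.1 - p.2) =
      (∫ p in R2n n Ω, (u p.1 - u p.2) ^ 2 * K (p.1 - p.2)) +
        2 * (∫ p in R2n n Ω, (u p.1 - u p.2) * (φ p.1 - φ p.2) * K (p.1 - p.2)) +
        ∫ p in R2n n Ω, (φ p.1 - φ p.2) ^ 2 * K (p.1 - p.2) := by
    rw [show (fun p : En n × En n => ((u p.1 + φ p.1) - (u p.2 + φ p.2)) ^ 2 * K (p.1 - p.2)) =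
        fun p : En n × En n => ((u p.1 - u p.2) ^ 2 * K (p.1 - p.2) +
          2 * ((u p.1 - u p.2) * (φ p.1 - φ p.2) * K (p.1 - p.2))) +
            (φ p.1 - φ p.2) ^ 2 * K (p.1 - p.2) from by funext p; ring]
    have hIuc : Integrable (fun p : En n × En n => (u p.1 - u p.2) ^ 2 * K (p.1 - p.2) +
        2 * ((u p.1 - u p.2) * (φ p.1 - φ p.2) * K (p.1 - p.2)))
        (volume.restrict (R2n n Ω)) := hIu.add (hIc.const_mul 2)
    rw [integral_add hIuc hIφ, integral_add hIu (hIc.const_mul 2), integral_const_mul]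
  -- V-part
  have hVu : Integrable (fun x => V x * u x ^ 2) (volume.restrict Ω) :=
    aux_integrable (hVmeas.mul (hu_meas.pow_const 2)).aestronglyMeasurable
      (Filter.Eventually.of_forall fun x => mul_nonneg (hV0 x) (sq_nonneg _)) hu_V
  have hVφ : Integrable (fun x => V x * φ x ^ 2) (volume.restrict Ω) :=
    aux_integrable (hVmeas.mul (hφm.pow_const 2)).aestronglyMeasurable
      (Filter.Eventually.of_forall fun x => mul_nonneg (hV0 x) (sq_nonneg _)) hφV
  have hVc : Integrable (fun x => V x * u x * φ x) (volume.restrict Ω) := by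
    refine ((hVu.add hVφ).const_mul (1/2)).mono'
      ((hVmeas.mul hu_meas).mul hφm).aestronglyMeasurable ?_
    filter_upwards with x
    simp only [Pi.add_apply]
    rw [Real.norm_eq_abs, abs_le]
    constructor <;> nlinarith [mul_nonneg (hV0 x) (sq_nonneg (u x - φ x)),
      mul_nonneg (hV0 x) (sq_nonneg (u x + φ x))]
  have h4u : (VIntSq n V Ω u).toReal = ∫ x in Ω, V x * u x ^ 2 :=
    aux_toReal_lintegral (hVmeas.mul (hu_meas.pow_const 2)).aestronglyMeasurable
      (Filter.Eventually.of_forall fun x => mul_nonneg (hV0 x) (sq_nonneg _))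
  have h4φ : (VIntSq n V Ω φ).toReal = ∫ x in Ω, V x * φ x ^ 2 :=
    aux_toReal_lintegral (hVmeas.mul (hφm.pow_const 2)).aestronglyMeasurable
      (Filter.Eventually.of_forall fun x => mul_nonneg (hV0 x) (sq_nonneg _))
  have h4s : (VIntSq n V Ω (fun x => u x + φ x)).toReal =
      ∫ x in Ω, V x * (u x + φ x) ^ 2 :=
    aux_toReal_lintegral (hVmeas.mul ((hu_meas.add hφm).pow_const 2)).aestronglyMeasurable
      (Filter.Eventually.of_forall fun x => mul_nonneg (hV0 x) (sq_nonneg _))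
  have h5 : ∫ x in Ω, V x * (u x + φ x) ^ 2 =
      (∫ x in Ω, V x * u x ^ 2) + 2 * (∫ x in Ω, V x * u x * φ x) +
        ∫ x in Ω, V x * φ x ^ 2 := by
    rw [show (fun x => V x * (u x + φ x) ^ 2) =
        fun x => (V x * u x ^ 2 + 2 * (V x * u x * φ x)) + V x * φ x ^ 2 from by
          funext x; ring]
    have hVuc : Integrable (fun x => V x * u x ^ 2 + 2 * (V x * u x * φ x))
        (volume.restrict Ω) := hVu.add (hVc.const_mul 2)
    rw [integral_add hVuc hVφ, integral_add hVu (hVc.const_mul 2), integral_const_mul]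
  -- f-part
  have hfu : Integrable (fun x => f x * u x) (volume.restrict Ω) := aux_integrable_mul hf hu_L2
  have hfφ : Integrable (fun x => f x * φ x) (volume.restrict Ω) := aux_integrable_mul hf hφL2
  have h6 : ∫ x in Ω, f x * (u x + φ x) =
      (∫ x in Ω, f x * u x) + ∫ x in Ω, f x * φ x := by
    rw [show (fun x => f x * (u x + φ x)) = fun x => f x * u x + f x * φ x from by
      funext x; ring]
    exact integral_add hfu hfφ
  -- assemble
  simp only [energyOn, bilinOn]
  rw [h2u, h2φ, h2s, h3, h4u, h4φ, h4s, h5, h6]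
  ring
/-- `u` is a superminimizer of the energy (over `ℝ^{2n}_Ω`) iff
`u` is a weak supersolution of `L_K u + V u = f` in `Ω`. -/
theorem stmt4 (n : ℕ) (hn : 2 ≤ n) (s : ℝ) (hs0 : 0 < s) (hs1 : s < 1)
    (c lam Lam : ℝ) (hlam : 0 < lam) (hlamLam : lam ≤ Lam) (hc : 0 < c)
    (hc1 : c * ∫ ξ : En n, (1 - Real.cos (ξ ⟨0, by omega⟩)) * ‖ξ‖ ^ (-((n : ℝ) + 2 * s)) = 1)
    (K : En n → ℝ) (hK : IsKernel n s lam Lam c K)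
    (q : ℝ) (hq : (n : ℝ) / (2 * s) < q)
    (V : En n → ℝ) (hVmeas : Measurable V) (hV0 : ∀ x, 0 ≤ V x) (hVq : LocLq n q V)
    (Ω : Set (En n)) (hΩo : IsOpen Ω) (hΩb : Bornology.IsBounded Ω)
    (f : En n → ℝ) (hf : MemLp f 2 (volume.restrict Ω))
    (u : En n → ℝ) (hu_meas : Measurable u)
    (hu_g : gagliardoSqOn n s Ω u < ⊤)
    (hu_L2 : MemLp u 2 (volume.restrict Ω))
    (hu_V : VIntSq n V Ω u < ⊤)
    (hu_plus : (fun x => max (u x) 0) ∈ Xs0 n s Ω) :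
    (∀ φ ∈ Ys0 n s Ω V, (∀ x, 0 ≤ φ x) →
        energyOn n Ω K V f u ≤ energyOn n Ω K V f (fun x => u x + φ x)) ↔
      (∀ φ ∈ Ys0 n s Ω V, (∀ x, 0 ≤ φ x) →
        ∫ x in Ω, f x * φ x ≤ bilinOn n Ω K u φ + ∫ x in Ω, V x * u x * φ x) := by
  have hΩm : MeasurableSet Ω := hΩo.measurableSet
  constructor
  · -- superminimizer → weak supersolution
    intro hmin φ hφ hφ0
    obtain ⟨⟨hφm, hφae, hφg⟩, hφV⟩ := hφ
    have hφL2 : MemLp φ 2 (volume.restrict Ω) :=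
      memL2_of_gagliardo hn hs0 hΩm hΩb hφm hφae hφg
    have hstep : ∀ ε : ℝ, 0 < ε →
        0 ≤ 2 * ((bilinOn n Ω K u φ + ∫ x in Ω, V x * u x * φ x) - ∫ x in Ω, f x * φ x) +
          ε * ((1/2) * (kerSqOn n Ω K φ).toReal + (VIntSq n V Ω φ).toReal) := by
      intro ε hε
      have hgε : gagliardoSq n s (fun x => ε * φ x) < ⊤ := by
        rw [gagliardoSq_smul]
        exact ENNReal.mul_lt_top ENNReal.ofReal_lt_top hφg
      have hVε : VIntSq n V Ω (fun x => ε * φ x) < ⊤ := by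
        rw [VIntSq_smul]
        exact ENNReal.mul_lt_top ENNReal.ofReal_lt_top hφV
      have hYε : (fun x => ε * φ x) ∈ Ys0 n s Ω V := by
        refine ⟨⟨hφm.const_mul ε, ?_, hgε⟩, hVε⟩
        filter_upwards [hφae] with x hx hxo
        rw [hx hxo, mul_zero]
      have hmin' := hmin (fun x => ε * φ x) hYε (fun x => mul_nonneg hε.le (hφ0 x))
      have hexp := energy_expand hlam hlamLam hc hK hVmeas hV0 hf hu_meas hu_g hu_L2 hu_V
        (hφm.const_mul ε) hgε hVε (hφL2.const_mul ε)
      beta_reduce at hexp hmin'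
      rw [bilinOn_smul, kerSqOn_smul, VIntSq_smul] at hexp
      simp only [ENNReal.toReal_mul, ENNReal.toReal_ofReal (sq_nonneg ε)] at hexp
      have hb' : (∫ x in Ω, V x * u x * (ε * φ x)) = ε * ∫ x in Ω, V x * u x * φ x := by
        rw [show (fun x => V x * u x * (ε * φ x)) = fun x => ε * (V x * u x * φ x) from by
          funext x; ring, integral_const_mul]
      have hd' : (∫ x in Ω, f x * (ε * φ x)) = ε * ∫ x in Ω, f x * φ x := by
        rw [show (fun x => f x * (ε * φ x)) = fun x => ε * (f x * φ x) from by
          funext x; ring, integral_const_mul]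
      rw [hb', hd'] at hexp
      rw [hexp] at hmin'
      have h8 : 0 ≤ 2 * ((ε * bilinOn n Ω K u φ + ε * ∫ x in Ω, V x * u x * φ x) -
          ε * ∫ x in Ω, f x * φ x) +
          ((1/2) * (ε^2 * (kerSqOn n Ω K φ).toReal) + ε^2 * (VIntSq n V Ω φ).toReal) := by
        linarith [hmin']
      have h7 : 0 ≤ ε *
          (2 * ((bilinOn n Ω K u φ + ∫ x in Ω, V x * u x * φ x) - ∫ x in Ω, f x * φ x) +
            ε * ((1/2) * (kerSqOn n Ω K φ).toReal + (VIntSq n V Ω φ).toReal)) := by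
        have heq : ε *
            (2 * ((bilinOn n Ω K u φ + ∫ x in Ω, V x * u x * φ x) - ∫ x in Ω, f x * φ x) +
              ε * ((1/2) * (kerSqOn n Ω K φ).toReal + (VIntSq n V Ω φ).toReal)) =
            2 * ((ε * bilinOn n Ω K u φ + ε * ∫ x in Ω, V x * u x * φ x) -
              ε * ∫ x in Ω, f x * φ x) +
              ((1/2) * (ε^2 * (kerSqOn n Ω K φ).toReal) +
                ε^2 * (VIntSq n V Ω φ).toReal) := by ring
        linarith [h8, heq.le, heq.ge]
      exact nonneg_of_mul_nonneg_right h7 hε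
    have hQ0 : 0 ≤ (1/2) * (kerSqOn n Ω K φ).toReal + (VIntSq n V Ω φ).toReal := by
      positivity
    have hmain : 0 ≤ 2 * ((bilinOn n Ω K u φ + ∫ x in Ω, V x * u x * φ x) -
        ∫ x in Ω, f x * φ x) := by
      by_contra hneg
      push_neg at hneg
      set T := 2 * ((bilinOn n Ω K u φ + ∫ x in Ω, V x * u x * φ x) - ∫ x in Ω, f x * φ x)
        with hT
      set Q := (1/2) * (kerSqOn n Ω K φ).toReal + (VIntSq n V Ω φ).toReal with hQ
      have hε : (0:ℝ) < -T / (Q + 1) := by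
        apply div_pos (by linarith) (by linarith)
      have := hstep _ hε
      have hle : (-T / (Q + 1)) * Q < -T := by
        rw [div_mul_eq_mul_div, div_lt_iff₀ (by linarith)]
        nlinarith
      linarith
    linarith [hmain]
  · -- weak supersolution → superminimizer
    intro hsol φ hφ hφ0
    obtain ⟨⟨hφm, hφae, hφg⟩, hφV⟩ := hφ
    have hφL2 : MemLp φ 2 (volume.restrict Ω) :=
      memL2_of_gagliardo hn hs0 hΩm hΩb hφm hφae hφg
    have hA := hsol φ ⟨⟨hφm, hφae, hφg⟩, hφV⟩ hφ0
    have hexp := energy_expand hlam hlamLam hc hK hVmeas hV0 hf hu_meas hu_g hu_L2 hu_V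
      hφm hφg hφV hφL2
    rw [hexp]
    have h1 : (0:ℝ) ≤ (kerSqOn n Ω K φ).toReal := ENNReal.toReal_nonneg
    have h2 : (0:ℝ) ≤ (VIntSq n V Ω φ).toReal := ENNReal.toReal_nonneg
    linarith
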